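/- For the Freund submanifold F₃ (β₁=β₂=α₁+α₂) with density f(x,y)=α₁(α₁+α₂)e^{-(α₁+α₂)y} on 0<x<y and α₂(α₁+α₂)e^{-(α₁+α₂)x} on 0<y<x, the covariance is Cov(X,Y) = (α₁²+α₁α₂+α₂²)/(α₁+α₂)⁴, which is strictly positive. -/

import Mathlib

open MeasureTheory Real Set Filter Topology

/-- Density of the Freund submanifold `F₃` (`β₁ = β₂ = α₁ + α₂`). -/
noncomputable def freundF3 (a1 a2 : ℝ) (x y : ℝ) : ℝ :=
  if 0 < x ∧ x < y then a1 * (a1 + a2) * Real.exp (-(a1 + a2) * y)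
  else if 0 < y ∧ y < x then a2 * (a1 + a2) * Real.exp (-(a1 + a2) * x)
  else 0

/-- Expectation of `φ(x,y)` under the `F₃` density. -/
noncomputable def f3E (a1 a2 : ℝ) (φ : ℝ → ℝ → ℝ) : ℝ :=
  ∫ x in Set.Ioi (0:ℝ), ∫ y in Set.Ioi (0:ℝ), φ x y * freundF3 a1 a2 x y

/-- Covariance of `X` and `Y` under the `F₃` density. -/
noncomputable def f3Cov (a1 a2 : ℝ) : ℝ :=
  f3E a1 a2 (fun x y => x * y) - f3E a1 a2 (fun x _ => x) * f3E a1 a2 (fun _ y => y)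

lemma tendsto_pow_exp_aux (s : ℝ) (hs : 0 < s) (n : ℕ) :
    Tendsto (fun x : ℝ => x ^ n * Real.exp (-s * x)) atTop (𝓝 0) := by
  have h := (tendsto_pow_mul_exp_neg_atTop_nhds_zero n).comp
    (tendsto_id.const_mul_atTop hs)
  have h2 := h.const_mul ((s : ℝ) ^ n)⁻¹
  rw [mul_zero] at h2
  refine h2.congr fun x => ?_
  simp only [Function.comp, id_eq]
  rw [mul_pow, neg_mul]
  field_simp

lemma tendsto_G (s p0 p1 p2 p3 : ℝ) (hs : 0 < s) :
    Tendsto (fun x : ℝ => -((p0 + p1*x + p2*x^2 + p3*x^3)/s + (p1 + 2*p2*x + 3*p3*x^2)/s^2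
      + (2*p2 + 6*p3*x)/s^3 + 6*p3/s^4) * Real.exp (-s*x)) atTop (𝓝 0) := by
  have h0 := (tendsto_pow_exp_aux s hs 0).const_mul (-(p0/s + p1/s^2 + 2*p2/s^3 + 6*p3/s^4))
  have h1 := (tendsto_pow_exp_aux s hs 1).const_mul (-(p1/s + 2*p2/s^2 + 6*p3/s^3))
  have h2 := (tendsto_pow_exp_aux s hs 2).const_mul (-(p2/s + 3*p3/s^2))
  have h3 := (tendsto_pow_exp_aux s hs 3).const_mul (-(p3/s))
  have key := ((h0.add h1).add (h2.add h3))
  simp only [mul_zero, add_zero] at key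
  refine key.congr fun x => ?_
  ring

lemma hasDerivAt_G (s p0 p1 p2 p3 x : ℝ) (hs : s ≠ 0) :
    HasDerivAt (fun x : ℝ => -((p0 + p1*x + p2*x^2 + p3*x^3)/s + (p1 + 2*p2*x + 3*p3*x^2)/s^2
      + (2*p2 + 6*p3*x)/s^3 + 6*p3/s^4) * Real.exp (-s*x))
      ((p0 + p1*x + p2*x^2 + p3*x^3) * Real.exp (-s*x)) x := by
  have hx1 : HasDerivAt (fun x : ℝ => x) 1 x := hasDerivAt_id x
  have hx2 : HasDerivAt (fun x : ℝ => x^2) (2*x) x := by simpa using hasDerivAt_pow 2 x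
  have hx3 : HasDerivAt (fun x : ℝ => x^3) (3*x^2) x := by
    simpa using hasDerivAt_pow 3 x
  have hQ : HasDerivAt (fun x : ℝ => -((p0 + p1*x + p2*x^2 + p3*x^3)/s
      + (p1 + 2*p2*x + 3*p3*x^2)/s^2 + (2*p2 + 6*p3*x)/s^3 + 6*p3/s^4))
      (-((p1 + 2*p2*x + 3*p3*x^2)/s + (2*p2 + 6*p3*x)/s^2 + 6*p3/s^3)) x := by
    have hP : HasDerivAt (fun x : ℝ => p0 + p1*x + p2*x^2 + p3*x^3)
        (p1 + 2*p2*x + 3*p3*x^2) x := by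
      have := (((hx1.const_mul p1).const_add p0).add (hx2.const_mul p2)).add (hx3.const_mul p3)
      exact this.congr_deriv (by ring)
    have hP1 : HasDerivAt (fun x : ℝ => p1 + 2*p2*x + 3*p3*x^2)
        (2*p2 + 6*p3*x) x := by
      have := ((hx1.const_mul (2*p2)).const_add p1).add (hx2.const_mul (3*p3))
      exact this.congr_deriv (by ring)
    have hP2 : HasDerivAt (fun x : ℝ => 2*p2 + 6*p3*x) (6*p3) x := by
      have := (hx1.const_mul (6*p3)).const_add (2*p2)
      exact this.congr_deriv (by ring)
    exact ((((hP.div_const s).add (hP1.div_const (s^2))).add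
      (hP2.div_const (s^3))).add_const (6*p3/s^4)).neg
  have hi : HasDerivAt (fun x : ℝ => -s*x) (-s) x := by
    simpa using (hasDerivAt_id x).const_mul (-s)
  have he := hi.exp
  have := hQ.mul he
  refine this.congr_deriv ?_
  field_simp
  ring

lemma integral_polyExp (s p0 p1 p2 p3 c : ℝ) (hs : 0 < s) (hc : 0 ≤ c)
    (h0 : 0 ≤ p0) (h1 : 0 ≤ p1) (h2 : 0 ≤ p2) (h3 : 0 ≤ p3) :
    IntegrableOn (fun x : ℝ => (p0 + p1*x + p2*x^2 + p3*x^3) * Real.exp (-s*x)) (Set.Ioi c) ∧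
    ∫ x in Set.Ioi c, (p0 + p1*x + p2*x^2 + p3*x^3) * Real.exp (-s*x)
      = ((p0 + p1*c + p2*c^2 + p3*c^3)/s + (p1 + 2*p2*c + 3*p3*c^2)/s^2
          + (2*p2 + 6*p3*c)/s^3 + 6*p3/s^4) * Real.exp (-s*c) := by
  have hderiv : ∀ x ∈ Set.Ici c,
      HasDerivAt (fun x : ℝ => -((p0 + p1*x + p2*x^2 + p3*x^3)/s
        + (p1 + 2*p2*x + 3*p3*x^2)/s^2 + (2*p2 + 6*p3*x)/s^3 + 6*p3/s^4) * Real.exp (-s*x))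
        ((p0 + p1*x + p2*x^2 + p3*x^3) * Real.exp (-s*x)) x :=
    fun x _ => hasDerivAt_G s p0 p1 p2 p3 x hs.ne'
  have hpos : ∀ x ∈ Set.Ioi c, 0 ≤ (p0 + p1*x + p2*x^2 + p3*x^3) * Real.exp (-s*x) := by
    intro x hx
    have hx0 : 0 ≤ x := hc.trans (le_of_lt hx)
    have := add_nonneg (add_nonneg (add_nonneg h0 (mul_nonneg h1 hx0))
      (mul_nonneg h2 (pow_nonneg hx0 2))) (mul_nonneg h3 (pow_nonneg hx0 3))
    exact mul_nonneg this (Real.exp_pos _).le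
  have ht := tendsto_G s p0 p1 p2 p3 hs
  refine ⟨integrableOn_Ioi_deriv_of_nonneg' hderiv hpos ht, ?_⟩
  rw [integral_Ioi_of_hasDerivAt_of_nonneg' hderiv hpos ht]
  ring

lemma inner_split (a1 a2 x : ℝ) (ha1 : 0 < a1) (ha2 : 0 < a2) (hx : 0 < x)
    (φ : ℝ → ℝ) (hφ : Continuous φ)
    (hint : IntegrableOn (fun y => φ y * (a1 * (a1 + a2) * Real.exp (-(a1 + a2) * y)))
      (Set.Ioi x)) :
    ∫ y in Set.Ioi (0:ℝ), φ y * freundF3 a1 a2 x y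
      = (∫ y in Set.Ioo 0 x, φ y) * (a2 * (a1 + a2) * Real.exp (-(a1 + a2) * x))
        + ∫ y in Set.Ioi x, φ y * (a1 * (a1 + a2) * Real.exp (-(a1 + a2) * y)) := by
  have hEq : ∀ y ∈ Set.Ioi (0:ℝ), φ y * freundF3 a1 a2 x y
      = (Set.Ioo 0 x).indicator (fun y => φ y * (a2 * (a1 + a2) * Real.exp (-(a1 + a2) * x))) y
        + (Set.Ioi x).indicator
            (fun y => φ y * (a1 * (a1 + a2) * Real.exp (-(a1 + a2) * y))) y := by
    intro y hy
    rcases lt_trichotomy y x with h | h | h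
    · rw [Set.indicator_of_mem (Set.mem_Ioo.mpr ⟨hy, h⟩),
        Set.indicator_of_notMem (by simp only [Set.mem_Ioi, not_lt]; exact h.le)]
      have : freundF3 a1 a2 x y = a2 * (a1 + a2) * Real.exp (-(a1 + a2) * x) := by
        unfold freundF3
        rw [if_neg (fun h' => absurd h'.2 (not_lt.2 h.le)), if_pos ⟨hy, h⟩]
      rw [this]; ring
    · subst h
      rw [Set.indicator_of_notMem (by simp), Set.indicator_of_notMem (by simp)]
      have : freundF3 a1 a2 y y = 0 := by
        unfold freundF3
        rw [if_neg (fun h' => lt_irrefl y h'.2), if_neg (fun h' => lt_irrefl y h'.2)]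
      rw [this]; ring
    · rw [Set.indicator_of_notMem
          (by simp only [Set.mem_Ioo, not_and, not_lt]; exact fun _ => h.le),
        Set.indicator_of_mem (Set.mem_Ioi.mpr h)]
      have : freundF3 a1 a2 x y = a1 * (a1 + a2) * Real.exp (-(a1 + a2) * y) := by
        unfold freundF3
        rw [if_pos ⟨hx, h⟩]
      rw [this]; ring
  rw [setIntegral_congr_fun measurableSet_Ioi hEq]
  have hi1 : Integrable ((Set.Ioo 0 x).indicator
      (fun y => φ y * (a2 * (a1 + a2) * Real.exp (-(a1 + a2) * x))))
      (volume.restrict (Set.Ioi 0)) := by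
    rw [integrable_indicator_iff measurableSet_Ioo]
    unfold IntegrableOn
    rw [Measure.restrict_restrict measurableSet_Ioo,
      Set.inter_eq_self_of_subset_left Set.Ioo_subset_Ioi_self]
    exact ((hφ.mul continuous_const).integrableOn_Icc).mono_set Set.Ioo_subset_Icc_self
  have hi2 : Integrable ((Set.Ioi x).indicator
      (fun y => φ y * (a1 * (a1 + a2) * Real.exp (-(a1 + a2) * y))))
      (volume.restrict (Set.Ioi 0)) := by
    rw [integrable_indicator_iff measurableSet_Ioi]
    unfold IntegrableOn
    rw [Measure.restrict_restrict measurableSet_Ioi,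
      Set.inter_eq_self_of_subset_left (Set.Ioi_subset_Ioi hx.le)]
    exact hint
  rw [integral_add hi1 hi2, integral_indicator measurableSet_Ioo,
    integral_indicator measurableSet_Ioi]
  rw [Measure.restrict_restrict measurableSet_Ioo,
    Set.inter_eq_self_of_subset_left Set.Ioo_subset_Ioi_self,
    Measure.restrict_restrict measurableSet_Ioi,
    Set.inter_eq_self_of_subset_left (Set.Ioi_subset_Ioi hx.le),
    integral_mul_const]

lemma f3E_y (a1 a2 : ℝ) (ha1 : 0 < a1) (ha2 : 0 < a2) :
    f3E a1 a2 (fun _ y => y) = (2*a1 + a2)/(a1+a2)^2 := by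
  have hs : 0 < a1 + a2 := by linarith
  have houter : ∀ x ∈ Set.Ioi (0:ℝ),
      (∫ y in Set.Ioi (0:ℝ), y * freundF3 a1 a2 x y)
        = (0 + (0 + a1/(a1+a2)*1 + a1*x + a2*(a1+a2)/2*x^2 + 0*x^3) * Real.exp (-(a1+a2)*x)) := by
    intro x hx
    have hfun : (fun y : ℝ => y * (a1 * (a1 + a2) * Real.exp (-(a1 + a2) * y)))
        = fun y : ℝ => (0 + (a1*(a1+a2))*y + 0*y^2 + 0*y^3) * Real.exp (-(a1+a2)*y) := by
      funext y; ring
    have hint : IntegrableOn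
        (fun y => y * (a1 * (a1 + a2) * Real.exp (-(a1 + a2) * y))) (Set.Ioi x) := by
      rw [hfun]
      exact (integral_polyExp (a1+a2) 0 (a1*(a1+a2)) 0 0 x hs hx.le le_rfl
        (by positivity) le_rfl le_rfl).1
    have hsplit := inner_split a1 a2 x ha1 ha2 hx (fun y => y) continuous_id hint
    rw [hsplit]
    have hIoo : (∫ y in Set.Ioo (0:ℝ) x, y) = x^2/2 := by
      rw [← integral_Ioc_eq_integral_Ioo, ← intervalIntegral.integral_of_le hx.le,
        integral_id]
      ring
    rw [hIoo, hfun,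
      (integral_polyExp (a1+a2) 0 (a1*(a1+a2)) 0 0 x hs hx.le le_rfl
        (by positivity) le_rfl le_rfl).2]
    field_simp
    ring
  have h1 : f3E a1 a2 (fun _ y => y)
      = ∫ x in Set.Ioi (0:ℝ),
          (0 + (0 + a1/(a1+a2)*1 + a1*x + a2*(a1+a2)/2*x^2 + 0*x^3) * Real.exp (-(a1+a2)*x)) :=
    setIntegral_congr_fun measurableSet_Ioi (fun x hx => houter x hx)
  have hfun2 : (fun x : ℝ =>
      (0 + (0 + a1/(a1+a2)*1 + a1*x + a2*(a1+a2)/2*x^2 + 0*x^3) * Real.exp (-(a1+a2)*x)))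
      = fun x : ℝ => (a1/(a1+a2) + a1*x + (a2*(a1+a2)/2)*x^2 + 0*x^3) * Real.exp (-(a1+a2)*x) := by
    funext x; ring
  rw [h1, hfun2,
    (integral_polyExp (a1+a2) (a1/(a1+a2)) a1 (a2*(a1+a2)/2) 0 0 hs le_rfl
      (div_nonneg ha1.le hs.le) ha1.le
      (div_nonneg (mul_nonneg ha2.le hs.le) (by norm_num)) le_rfl).2]
  simp only [mul_zero, Real.exp_zero, mul_one]
  field_simp
  ring

lemma f3E_x (a1 a2 : ℝ) (ha1 : 0 < a1) (ha2 : 0 < a2) :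
    f3E a1 a2 (fun x _ => x) = (a1 + 2*a2)/(a1+a2)^2 := by
  have hs : 0 < a1 + a2 := by linarith
  have houter : ∀ x ∈ Set.Ioi (0:ℝ),
      (∫ y in Set.Ioi (0:ℝ), x * freundF3 a1 a2 x y)
        = (0 + (0 + 0*1 + a1*x + a2*(a1+a2)*x^2 + 0*x^3) * Real.exp (-(a1+a2)*x)) := by
    intro x hx
    have hfun : (fun y : ℝ => x * (a1 * (a1 + a2) * Real.exp (-(a1 + a2) * y)))
        = fun y : ℝ => ((x*(a1*(a1+a2))) + 0*y + 0*y^2 + 0*y^3) * Real.exp (-(a1+a2)*y) := by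
      funext y; ring
    have hp0 : (0:ℝ) ≤ x*(a1*(a1+a2)) :=
      mul_nonneg (le_of_lt hx) (mul_nonneg ha1.le hs.le)
    have hint : IntegrableOn
        (fun y => x * (a1 * (a1 + a2) * Real.exp (-(a1 + a2) * y))) (Set.Ioi x) := by
      rw [hfun]
      exact (integral_polyExp (a1+a2) (x*(a1*(a1+a2))) 0 0 0 x hs hx.le hp0
        le_rfl le_rfl le_rfl).1
    have hsplit := inner_split a1 a2 x ha1 ha2 hx (fun _ => x) continuous_const hint
    rw [hsplit]
    have hIoo : (∫ _ in Set.Ioo (0:ℝ) x, x) = x * x := by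
      simp [Real.volume_Ioo, ENNReal.toReal_ofReal hx.le, (le_of_lt hx : (0:ℝ) ≤ x)]
    rw [hIoo, hfun,
      (integral_polyExp (a1+a2) (x*(a1*(a1+a2))) 0 0 0 x hs hx.le hp0
        le_rfl le_rfl le_rfl).2]
    field_simp
    ring
  have h1 : f3E a1 a2 (fun x _ => x)
      = ∫ x in Set.Ioi (0:ℝ),
          (0 + (0 + 0*1 + a1*x + a2*(a1+a2)*x^2 + 0*x^3) * Real.exp (-(a1+a2)*x)) :=
    setIntegral_congr_fun measurableSet_Ioi (fun x hx => houter x hx)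
  have hfun2 : (fun x : ℝ =>
      (0 + (0 + 0*1 + a1*x + a2*(a1+a2)*x^2 + 0*x^3) * Real.exp (-(a1+a2)*x)))
      = fun x : ℝ => ((0:ℝ) + a1*x + (a2*(a1+a2))*x^2 + 0*x^3) * Real.exp (-(a1+a2)*x) := by
    funext x; ring
  rw [h1, hfun2,
    (integral_polyExp (a1+a2) 0 a1 (a2*(a1+a2)) 0 0 hs le_rfl le_rfl ha1.le
      (mul_nonneg ha2.le hs.le) le_rfl).2]
  simp only [mul_zero, Real.exp_zero, mul_one]
  field_simp
  ring

lemma f3E_xy (a1 a2 : ℝ) (ha1 : 0 < a1) (ha2 : 0 < a2) :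
    f3E a1 a2 (fun x y => x * y) = 3/(a1+a2)^2 := by
  have hs : 0 < a1 + a2 := by linarith
  have houter : ∀ x ∈ Set.Ioi (0:ℝ),
      (∫ y in Set.Ioi (0:ℝ), x * y * freundF3 a1 a2 x y)
        = (0 + (0 + 0*1 + a1/(a1+a2)*x + a1*x^2 + a2*(a1+a2)/2*x^3) * Real.exp (-(a1+a2)*x)) := by
    intro x hx
    have hfun : (fun y : ℝ => x * y * (a1 * (a1 + a2) * Real.exp (-(a1 + a2) * y)))
        = fun y : ℝ => (0 + (x*(a1*(a1+a2)))*y + 0*y^2 + 0*y^3) * Real.exp (-(a1+a2)*y) := by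
      funext y; ring
    have hp1 : (0:ℝ) ≤ x*(a1*(a1+a2)) :=
      mul_nonneg (le_of_lt hx) (mul_nonneg ha1.le hs.le)
    have hint : IntegrableOn
        (fun y => x * y * (a1 * (a1 + a2) * Real.exp (-(a1 + a2) * y))) (Set.Ioi x) := by
      rw [hfun]
      exact (integral_polyExp (a1+a2) 0 (x*(a1*(a1+a2))) 0 0 x hs hx.le le_rfl
        hp1 le_rfl le_rfl).1
    have hsplit := inner_split a1 a2 x ha1 ha2 hx (fun y => x * y)
      (continuous_const.mul continuous_id) hint
    rw [hsplit]
    have hIoo : (∫ y in Set.Ioo (0:ℝ) x, x * y) = x * (x^2/2) := by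
      rw [← integral_Ioc_eq_integral_Ioo, ← intervalIntegral.integral_of_le hx.le,
        intervalIntegral.integral_const_mul, integral_id]
      ring
    rw [hIoo, hfun,
      (integral_polyExp (a1+a2) 0 (x*(a1*(a1+a2))) 0 0 x hs hx.le le_rfl
        hp1 le_rfl le_rfl).2]
    field_simp
    ring
  have h1 : f3E a1 a2 (fun x y => x * y)
      = ∫ x in Set.Ioi (0:ℝ),
          (0 + (0 + 0*1 + a1/(a1+a2)*x + a1*x^2 + a2*(a1+a2)/2*x^3) * Real.exp (-(a1+a2)*x)) :=
    setIntegral_congr_fun measurableSet_Ioi (fun x hx => houter x hx)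
  have hfun2 : (fun x : ℝ =>
      (0 + (0 + 0*1 + a1/(a1+a2)*x + a1*x^2 + a2*(a1+a2)/2*x^3) * Real.exp (-(a1+a2)*x)))
      = fun x : ℝ => ((0:ℝ) + (a1/(a1+a2))*x + a1*x^2 + (a2*(a1+a2)/2)*x^3)
          * Real.exp (-(a1+a2)*x) := by
    funext x; ring
  rw [h1, hfun2,
    (integral_polyExp (a1+a2) 0 (a1/(a1+a2)) a1 (a2*(a1+a2)/2) 0 hs le_rfl le_rfl
      (div_nonneg ha1.le hs.le) ha1.le
      (div_nonneg (mul_nonneg ha2.le hs.le) (by norm_num))).2]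
  simp only [mul_zero, Real.exp_zero, mul_one]
  field_simp
  ring

theorem freundF3_covariance (a1 a2 : ℝ) (ha1 : 0 < a1) (ha2 : 0 < a2) :
    f3Cov a1 a2 = (a1 ^ 2 + a1 * a2 + a2 ^ 2) / (a1 + a2) ^ 4 ∧ 0 < f3Cov a1 a2 := by
  have hs : 0 < a1 + a2 := by linarith
  have hcov : f3Cov a1 a2 = (a1 ^ 2 + a1 * a2 + a2 ^ 2) / (a1 + a2) ^ 4 := by
    unfold f3Cov
    rw [f3E_xy a1 a2 ha1 ha2, f3E_x a1 a2 ha1 ha2, f3E_y a1 a2 ha1 ha2]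
    field_simp
    ring
  refine ⟨hcov, hcov ▸ ?_⟩
  have hnum : 0 < a1 ^ 2 + a1 * a2 + a2 ^ 2 := by positivity
  positivity
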